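/- arXiv:2011.02169 — 6 statements merged into one kernel-verified Lean document; each statement's English description precedes it below -/
import Mathlib

section
/- Let u, v : [0,∞) → ℝ be C¹ solutions of u' = −(γ+β)u + βu((n−1)v/n + u/n) and v' = −β((n−2)/n)uv, with γ, β > 0, n > 2, and suppose u(t) ≥ 0, v(t) ≥ 0, u(t)+v(t) ≤ n for all t ≥ 0. Then (u+v)'(t) = −γu(t) − βu(t)(1 − (u(t)+v(t))/n) ≤ 0 for all t, and ∫₀^∞ u(t) dt < ∞; in particular u(t) → 0 as t → ∞. -/
open Set Filter

/-- Fast-limit auxiliary variables u = [SI]/[S], v = [SS]/[S]: u+v decreases,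
u is integrable on [0,∞), and u → 0. -/
theorem fast_limit_u_integrable (β γ n : ℝ) (hβ : 0 < β) (hγ : 0 < γ) (hn : 2 < n)
    (u v : ℝ → ℝ)
    (hu : ∀ t ≥ (0:ℝ), HasDerivAt u (-(γ + β) * u t + β * u t * ((n - 1) * v t / n + u t / n)) t)
    (hv : ∀ t ≥ (0:ℝ), HasDerivAt v (-β * ((n - 2) / n) * u t * v t) t)
    (hu0 : ∀ t ≥ (0:ℝ), 0 ≤ u t) (hv0 : ∀ t ≥ (0:ℝ), 0 ≤ v t)
    (hsum : ∀ t ≥ (0:ℝ), u t + v t ≤ n) :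
    (∀ t ≥ (0:ℝ), HasDerivAt (fun s => u s + v s)
        (-γ * u t - β * u t * (1 - (u t + v t) / n)) t ∧
      -γ * u t - β * u t * (1 - (u t + v t) / n) ≤ 0) ∧
    MeasureTheory.IntegrableOn u (Ici (0:ℝ)) ∧
    Tendsto u atTop (nhds 0) := by
  have hn0 : (0:ℝ) < n := by linarith
  have hn0' : (n:ℝ) ≠ 0 := ne_of_gt hn0
  -- Part 1: derivative of u + v
  have hw : ∀ t ≥ (0:ℝ), HasDerivAt (fun s => u s + v s)
      (-γ * u t - β * u t * (1 - (u t + v t) / n)) t := by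
    intro t ht
    have h := (hu t ht).add (hv t ht)
    refine h.congr_deriv ?_
    ring
  have hw0 : ∀ t ≥ (0:ℝ), -γ * u t - β * u t * (1 - (u t + v t) / n) ≤ 0 := by
    intro t ht
    have h1 : 0 ≤ u t := hu0 t ht
    have h2 : (u t + v t) / n ≤ 1 := by
      rw [div_le_one hn0]; exact hsum t ht
    have h3 : 0 ≤ 1 - (u t + v t) / n := by linarith
    have : 0 ≤ β * u t * (1 - (u t + v t) / n) := by positivity
    nlinarith
  -- continuity
  have hcu : ContinuousOn u (Ici (0:ℝ)) := fun t ht =>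
    ((hu t ht).continuousAt).continuousWithinAt
  have hcv : ContinuousOn v (Ici (0:ℝ)) := fun t ht =>
    ((hv t ht).continuousAt).continuousWithinAt
  have hcw : ContinuousOn (fun s => u s + v s) (Ici (0:ℝ)) := hcu.add hcv
  -- w := u + v is antitone on Ici 0
  have hIci : interior (Ici (0:ℝ)) = Ioi 0 := interior_Ici
  have hwanti : AntitoneOn (fun s => u s + v s) (Ici (0:ℝ)) := by
    apply antitoneOn_of_hasDerivWithinAt_nonpos (f' := fun t =>
      -γ * u t - β * u t * (1 - (u t + v t) / n)) (convex_Ici 0) hcw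
    · intro x hx
      rw [hIci] at hx ⊢
      exact ((hw x (le_of_lt hx)).hasDerivWithinAt)
    · intro x hx
      rw [hIci] at hx
      exact hw0 x (le_of_lt hx)
  -- v is antitone on Ici 0
  have hvanti : AntitoneOn v (Ici (0:ℝ)) := by
    apply antitoneOn_of_hasDerivWithinAt_nonpos (f' := fun t =>
      -β * ((n - 2) / n) * u t * v t) (convex_Ici 0) hcv
    · intro x hx
      rw [hIci] at hx ⊢
      exact ((hv x (le_of_lt hx)).hasDerivWithinAt)
    · intro x hx
      rw [hIci] at hx
      have h1 : 0 ≤ u x := hu0 x (le_of_lt hx)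
      have h2 : 0 ≤ v x := hv0 x (le_of_lt hx)
      have h3 : 0 ≤ β * ((n - 2) / n) * u x * v x := by
        have hq : (0:ℝ) ≤ (n - 2) / n := div_nonneg (by linarith) hn0.le
        positivity
      linarith
  -- integrability
  have key : ∀ T ≥ (0:ℝ), γ * ∫ t in (0:ℝ)..T, u t ≤ u 0 + v 0 := by
    intro T hT
    have hicc : Icc (0:ℝ) T ⊆ Ici 0 := fun x hx => hx.1
    have huT : IntervalIntegrable u MeasureTheory.volume 0 T := by
      apply ContinuousOn.intervalIntegrable
      rw [uIcc_of_le hT]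
      exact hcu.mono hicc
    have hwderiv : ∀ t ∈ uIcc (0:ℝ) T, HasDerivAt (fun s => u s + v s)
        (-γ * u t - β * u t * (1 - (u t + v t) / n)) t := by
      intro t ht
      rw [uIcc_of_le hT] at ht
      exact hw t ht.1
    have hw'int : IntervalIntegrable
        (fun t => -γ * u t - β * u t * (1 - (u t + v t) / n)) MeasureTheory.volume 0 T := by
      apply ContinuousOn.intervalIntegrable
      rw [uIcc_of_le hT]
      refine ContinuousOn.sub ?_ ?_
      · exact (continuousOn_const.mul (hcu.mono hicc))
      · exact (continuousOn_const.mul (hcu.mono hicc)).mul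
          (continuousOn_const.sub (((hcu.mono hicc).add (hcv.mono hicc)).div_const n))
    have ftc : (∫ t in (0:ℝ)..T, (-γ * u t - β * u t * (1 - (u t + v t) / n)))
        = (u T + v T) - (u 0 + v 0) :=
      intervalIntegral.integral_eq_sub_of_hasDerivAt hwderiv hw'int
    have hmono : (∫ t in (0:ℝ)..T, (-γ * u t - β * u t * (1 - (u t + v t) / n)))
        ≤ ∫ t in (0:ℝ)..T, (-γ) * u t := by
      apply intervalIntegral.integral_mono_on hT hw'int (huT.const_mul _)
      intro t ht
      have h1 : 0 ≤ u t := hu0 t ht.1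
      have h2 : (u t + v t) / n ≤ 1 := by rw [div_le_one hn0]; exact hsum t ht.1
      have h4 : 0 ≤ β * u t * (1 - (u t + v t) / n) :=
        mul_nonneg (mul_nonneg hβ.le h1) (by linarith)
      linarith
    rw [ftc, intervalIntegral.integral_const_mul] at hmono
    have hwT : 0 ≤ u T + v T := add_nonneg (hu0 T hT) (hv0 T hT)
    linarith
  have hInt : MeasureTheory.IntegrableOn u (Ici (0:ℝ)) := by
    rw [integrableOn_Ici_iff_integrableOn_Ioi]
    apply MeasureTheory.integrableOn_Ioi_of_intervalIntegral_norm_bounded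
      ((u 0 + v 0) / γ) (0:ℝ) (b := fun i : ℝ => i) (l := atTop)
    · intro i
      rcases le_or_gt i 0 with hi | hi
      · rw [Ioc_eq_empty (by simpa using hi.not_gt)]
        simp [MeasureTheory.integrableOn_empty]
      · apply ContinuousOn.integrableOn_Icc (hcu.mono (fun x hx => hx.1))
          |>.mono_set Ioc_subset_Icc_self
    · exact tendsto_id
    · filter_upwards [eventually_ge_atTop (0:ℝ)] with i hi
      have : (∫ x in (0:ℝ)..i, ‖u x‖) = ∫ x in (0:ℝ)..i, u x := by
        apply intervalIntegral.integral_congr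
        intro x hx
        rw [uIcc_of_le hi] at hx
        exact Real.norm_of_nonneg (hu0 x hx.1)
      rw [this, le_div_iff₀ hγ, mul_comm]
      exact key i hi
  refine ⟨fun t ht => ⟨hw t ht, hw0 t ht⟩, hInt, ?_⟩
  -- u tends to a limit c
  set W : ℝ → ℝ := fun t => u (max t 0) + v (max t 0) with hW
  set V : ℝ → ℝ := fun t => v (max t 0) with hV
  have hmax : ∀ t : ℝ, max t 0 ∈ Ici (0:ℝ) := fun t => le_max_right t 0
  have hWanti : Antitone W := fun s t hst =>
    hwanti (hmax s) (hmax t) (max_le_max hst le_rfl)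
  have hVanti : Antitone V := fun s t hst =>
    hvanti (hmax s) (hmax t) (max_le_max hst le_rfl)
  have hWbdd : BddBelow (range W) := by
    refine ⟨0, ?_⟩
    rintro x ⟨t, rfl⟩
    exact add_nonneg (hu0 _ (hmax t)) (hv0 _ (hmax t))
  have hVbdd : BddBelow (range V) := by
    refine ⟨0, ?_⟩
    rintro x ⟨t, rfl⟩
    exact hv0 _ (hmax t)
  have hWt : Tendsto W atTop (nhds (⨅ t, W t)) := tendsto_atTop_ciInf hWanti hWbdd
  have hVt : Tendsto V atTop (nhds (⨅ t, V t)) := tendsto_atTop_ciInf hVanti hVbdd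
  have hUt : Tendsto (fun t => u (max t 0)) atTop
      (nhds ((⨅ t, W t) - (⨅ t, V t))) := by
    have := hWt.sub hVt
    simpa [hW, hV] using this
  have hueq : (fun t => u (max t 0)) =ᶠ[atTop] u := by
    filter_upwards [eventually_ge_atTop (0:ℝ)] with t ht
    simp [max_eq_left ht]
  have hut : Tendsto u atTop (nhds ((⨅ t, W t) - (⨅ t, V t))) :=
    hUt.congr' hueq
  set c := (⨅ t, W t) - (⨅ t, V t) with hc
  have hc0 : 0 ≤ c := by
    apply ge_of_tendsto hut
    filter_upwards [eventually_ge_atTop (0:ℝ)] with t ht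
    exact hu0 t ht
  -- c = 0 from integrability
  have hceq : c = 0 := by
    by_contra hne
    have hcpos : 0 < c := lt_of_le_of_ne hc0 (Ne.symm hne)
    have hev : ∀ᶠ t in atTop, c / 2 ≤ u t := by
      have := hut.eventually (eventually_ge_nhds (show c / 2 < c by linarith))
      exact this
    obtain ⟨T, hT⟩ := hev.exists_forall_of_atTop
    set T' := max T 0 with hT'
    have hsub : Ici T' ⊆ Ici (0:ℝ) := Ici_subset_Ici.mpr (le_max_right T 0)
    have hIntT : MeasureTheory.IntegrableOn u (Ici T') := hInt.mono_set hsub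
    have hconst : MeasureTheory.IntegrableOn (fun _ : ℝ => c / 2) (Ici T') := by
      apply MeasureTheory.Integrable.mono hIntT
        (MeasureTheory.aestronglyMeasurable_const)
      filter_upwards [MeasureTheory.ae_restrict_mem measurableSet_Ici] with x hx
      have hx1 : c / 2 ≤ u x := hT x (le_trans (le_max_left T 0) hx)
      rw [Real.norm_of_nonneg (by linarith), Real.norm_of_nonneg (by linarith)]
      exact hx1
    rcases MeasureTheory.integrable_const_iff.mp hconst with h | h
    · exact absurd h (by simpa using (by linarith : c / 2 ≠ 0))
    · have h := h.measure_univ_lt_top; rw [MeasureTheory.Measure.restrict_apply_univ] at h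
      simp [Real.volume_Ici] at h
  rw [hceq] at hut
  exact hut
end

section
/- Along solutions of the fast (layer) system [S]' = −β[SI], [SS]' = −2β((n−1)/n)[SS][SI]/[S] (with [S] > 0, [SS] > 0), the quantity V(t) = ln([SS](t)) − (2(n−1)/n)·ln([S](t)) is a constant of motion; equivalently [SS](t) = [SS](0)·([S](t)/[S](0))^{(2n−2)/n} for all t ≥ 0. -/
open Real

/-- Constant of motion of the fast (layer) system: [SS] = [SS]₀ ([S]/[S]₀)^((2n−2)/n). -/
theorem layer_constant_of_motion (β n : ℝ) (hβ : 0 < β) (hn : 2 < n)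
    (S SS SI : ℝ → ℝ) (hSI : Continuous SI)
    (hSpos : ∀ t ≥ (0:ℝ), 0 < S t) (hSSpos : ∀ t ≥ (0:ℝ), 0 < SS t)
    (hS : ∀ t ≥ (0:ℝ), HasDerivAt S (-β * SI t) t)
    (hSS : ∀ t ≥ (0:ℝ), HasDerivAt SS (-2 * β * ((n - 1) / n) * SS t * SI t / S t) t) :
    ∀ t ≥ (0:ℝ),
      Real.log (SS t) - (2 * (n - 1) / n) * Real.log (S t)
        = Real.log (SS 0) - (2 * (n - 1) / n) * Real.log (S 0) ∧
      SS t = SS 0 * (S t / S 0) ^ ((2 * n - 2) / n) := by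
  have hn0 : n ≠ 0 := by linarith
  set c := 2 * (n - 1) / n with hc
  have key : ∀ t ≥ (0:ℝ),
      Real.log (SS t) - c * Real.log (S t)
        = Real.log (SS 0) - c * Real.log (S 0) := by
    intro t ht
    have hderiv : ∀ x ∈ Set.Icc (0:ℝ) t,
        HasDerivAt (fun u => Real.log (SS u) - c * Real.log (S u)) 0 x := by
      intro x hx
      have hx0 : (0:ℝ) ≤ x := hx.1
      have hSx : S x ≠ 0 := (hSpos x hx0).ne'
      have hSSx : SS x ≠ 0 := (hSSpos x hx0).ne'
      have h1 := (hSS x hx0).log hSSx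
      have h2 := ((hS x hx0).log hSx).const_mul c
      have h := h1.sub h2
      refine h.congr_deriv ?_
      rw [hc]
      field_simp
      ring
    exact constant_of_has_deriv_right_zero
      (f := fun u => Real.log (SS u) - c * Real.log (S u))
      (fun x hx => (hderiv x hx).continuousAt.continuousWithinAt)
      (fun x hx => (hderiv x ⟨hx.1, hx.2.le⟩).hasDerivWithinAt) t ⟨ht, le_refl t⟩
  intro t ht
  refine ⟨key t ht, ?_⟩
  have hSt := hSpos t ht
  have hSSt := hSSpos t ht
  have hS0 := hSpos 0 le_rfl
  have hSS0 := hSSpos 0 le_rfl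
  have hdivpos : 0 < S t / S 0 := div_pos hSt hS0
  have hec : (2 * n - 2) / n = c := by rw [hc]; ring
  have hrhs : 0 < SS 0 * (S t / S 0) ^ ((2 * n - 2) / n) :=
    mul_pos hSS0 (Real.rpow_pos_of_pos hdivpos _)
  have hlog : Real.log (SS t) = Real.log (SS 0 * (S t / S 0) ^ ((2 * n - 2) / n)) := by
    rw [Real.log_mul hSS0.ne' (Real.rpow_pos_of_pos hdivpos _).ne',
      Real.log_rpow hdivpos, Real.log_div hSt.ne' hS0.ne', hec]
    have := key t ht
    linarith [this]
  have := congrArg Real.exp hlog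
  rwa [Real.exp_log hSSt, Real.exp_log hrhs] at this
end

section
/- The Jacobian of the pairwise SIRS vector field (with ε = 0) at a point of the critical manifold C₀ = {[I]=[SI]=[II]=0} with [S] > 0 has eigenvalues 0 (double), −γ, −2γ, and λ₅ = β((n−1)/n)([SS]/[S]) − (γ+β); in particular λ₅ < 0 if and only if [SS] < L[S], where L = n(β+γ)/(β(n−1)). -/
open Polynomial

/-- The layer (ε = 0) pairwise SIRS vector field. Coordinates:
p 0 = [S], p 1 = [I], p 2 = [SS], p 3 = [SI], p 4 = [II]. -/
noncomputable def layerSIRS (β γ n : ℝ) (p : Fin 5 → ℝ) : Fin 5 → ℝ :=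
  ![-β * p 3,
    β * p 3 - γ * p 1,
    -2 * β * ((n - 1) / n) * p 2 * p 3 / p 0,
    -(γ + β) * p 3 + β * ((n - 1) / n) * p 3 * (p 2 - p 3) / p 0,
    2 * β * p 3 - 2 * γ * p 4 + 2 * β * ((n - 1) / n) * p 3 ^ 2 / p 0]

set_option maxHeartbeats 1000000 in
/-- At a point of the critical manifold C₀ = {[I]=[SI]=[II]=0} with [S] > 0, the Jacobian of
the layer vector field has characteristic polynomial X²(X+γ)(X+2γ)(X−λ₅), i.e. eigenvalues
0 (double), −γ, −2γ and λ₅ = β((n−1)/n)[SS]/[S] − (γ+β); and λ₅ < 0 ↔ [SS] < L[S]. -/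
theorem jacobian_eigenvalues_on_critical_manifold (β γ n : ℝ)
    (hβ : 0 < β) (hγ : 0 < γ) (hn : 2 < n)
    (S SS : ℝ) (hS : 0 < S) (hSS : 0 ≤ SS) :
    let x : Fin 5 → ℝ := ![S, 0, SS, 0, 0]
    let J : Matrix (Fin 5) (Fin 5) ℝ :=
      Matrix.of fun i j => fderiv ℝ (fun p : Fin 5 → ℝ => layerSIRS β γ n p i) x (Pi.single j 1)
    let lam5 : ℝ := β * ((n - 1) / n) * (SS / S) - (γ + β)
    J.charpoly = X ^ 2 * (X + C γ) * (X + C (2 * γ)) * (X - C lam5) ∧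
      (lam5 < 0 ↔ SS < (n * (β + γ) / (β * (n - 1))) * S) := by
  intro x J lam5
  have hS0 : x 0 ≠ 0 := hS.ne'
  set k : ℝ := (n - 1) / n with hk
  have hinv : HasFDerivAt (fun p : Fin 5 → ℝ => (p 0)⁻¹)
      ((-ContinuousLinearMap.mulLeftRight ℝ ℝ (x 0)⁻¹ (x 0)⁻¹).comp
        (ContinuousLinearMap.proj 0)) x :=
    (hasFDerivAt_inv' hS0).comp x (hasFDerivAt_apply 0 x)
  have h0 := (hasFDerivAt_apply (𝕜 := ℝ) (F' := fun _ : Fin 5 => ℝ) 3 x).const_mul (-β)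
  have h1 := ((hasFDerivAt_apply (𝕜 := ℝ) (F' := fun _ : Fin 5 => ℝ) 3 x).const_mul β).sub
    ((hasFDerivAt_apply 1 x).const_mul γ)
  have h2 := ((((hasFDerivAt_apply (𝕜 := ℝ) (F' := fun _ : Fin 5 => ℝ) 2 x).const_mul
    (-2 * β * k)).mul (hasFDerivAt_apply 3 x)).mul hinv)
  have h3 := (((hasFDerivAt_apply (𝕜 := ℝ) (F' := fun _ : Fin 5 => ℝ) 3 x).const_mul
    (-(γ + β))).add ((((hasFDerivAt_apply 3 x).const_mul (β * k)).mul
    ((hasFDerivAt_apply 2 x).sub (hasFDerivAt_apply 3 x))).mul hinv))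
  have h4 := ((((hasFDerivAt_apply (𝕜 := ℝ) (F' := fun _ : Fin 5 => ℝ) 3 x).const_mul
    (2 * β)).sub ((hasFDerivAt_apply 4 x).const_mul (2 * γ))).add
    ((((hasFDerivAt_apply 3 x).mul (hasFDerivAt_apply 3 x)).const_mul (2 * β * k)).mul hinv))
  have hx0 : x 0 = S := rfl
  have hx2 : x 2 = SS := rfl
  have hx3 : x 3 = 0 := rfl
  have e0 : (fun p : Fin 5 → ℝ => layerSIRS β γ n p 0) = fun p => -β * p 3 := by
    funext p; simp [layerSIRS]
  have e1 : (fun p : Fin 5 → ℝ => layerSIRS β γ n p 1) = fun p => β * p 3 - γ * p 1 := by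
    funext p; simp [layerSIRS]
  have e2 : (fun p : Fin 5 → ℝ => layerSIRS β γ n p 2)
      = fun p => -2 * β * k * p 2 * p 3 * (p 0)⁻¹ := by
    funext p; simp [layerSIRS, div_eq_mul_inv, hk]
  have e3 : (fun p : Fin 5 → ℝ => layerSIRS β γ n p 3)
      = fun p => -(γ + β) * p 3 + β * k * p 3 * (p 2 - p 3) * (p 0)⁻¹ := by
    funext p; simp [layerSIRS, div_eq_mul_inv, hk]
  have e4 : (fun p : Fin 5 → ℝ => layerSIRS β γ n p 4)
      = fun p => 2 * β * p 3 - 2 * γ * p 4 + 2 * β * k * (p 3 * p 3) * (p 0)⁻¹ := by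
    funext p; simp [layerSIRS, div_eq_mul_inv, hk, pow_two]
  have hJ : J = !![0,0,0,-β,0; 0,-γ,0,β,0; 0,0,0,-2*β*k*SS/S,0;
      0,0,0,lam5,0; 0,0,0,2*β,-2*γ] := by
    funext i j
    fin_cases i
    · show fderiv ℝ (fun p : Fin 5 → ℝ => layerSIRS β γ n p 0) x (Pi.single j 1) = _
      rw [e0, h0.fderiv]
      fin_cases j <;> simp [Pi.single_apply, Matrix.vecHead, Matrix.vecTail]
    · show fderiv ℝ (fun p : Fin 5 → ℝ => layerSIRS β γ n p 1) x (Pi.single j 1) = _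
      erw [e1, h1.fderiv]
      fin_cases j <;> simp [Pi.single_apply, Matrix.vecHead, Matrix.vecTail]
    · show fderiv ℝ (fun p : Fin 5 → ℝ => layerSIRS β γ n p 2) x (Pi.single j 1) = _
      erw [e2, h2.fderiv]
      fin_cases j <;>
        simp [Pi.single_apply, Matrix.vecHead, Matrix.vecTail, hx0, hx2, hx3, div_eq_mul_inv] <;> ring
    · show fderiv ℝ (fun p : Fin 5 → ℝ => layerSIRS β γ n p 3) x (Pi.single j 1) = _
      erw [e3, h3.fderiv]
      fin_cases j <;>
        simp [Pi.single_apply, Matrix.vecHead, Matrix.vecTail, hx0, hx2, hx3, lam5, hk, div_eq_mul_inv] <;> ring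
    · show fderiv ℝ (fun p : Fin 5 → ℝ => layerSIRS β γ n p 4) x (Pi.single j 1) = _
      erw [e4, h4.fderiv]
      fin_cases j <;>
        simp [Pi.single_apply, Matrix.vecHead, Matrix.vecTail, hx0, hx2, hx3, div_eq_mul_inv] <;> ring
  constructor
  · rw [hJ, Matrix.charpoly]
    have hcm : Matrix.charmatrix (!![0,0,0,-β,0; 0,-γ,0,β,0; 0,0,0,-2*β*k*SS/S,0;
        0,0,0,lam5,0; 0,0,0,2*β,-2*γ] : Matrix (Fin 5) (Fin 5) ℝ) =
        !![X, 0, 0, -C (-β), 0;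
           0, X - C (-γ), 0, -C β, 0;
           0, 0, X, -C (-2*β*k*SS/S), 0;
           0, 0, 0, X - C lam5, 0;
           0, 0, 0, -C (2*β), X - C (-2*γ)] := by
      funext i j
      fin_cases i <;> fin_cases j <;>
        simp [Matrix.charmatrix_apply, Matrix.diagonal_apply, Matrix.vecHead, Matrix.vecTail]
    rw [hcm]
    simp [Matrix.det_succ_row_zero, Fin.sum_univ_succ, Matrix.vecHead, Matrix.vecTail,
      neg_mul, map_neg]
    ring
  · have hn0 : (0:ℝ) < n := by linarith
    have hn1 : (0:ℝ) < n - 1 := by linarith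
    have e1 : β * ((n - 1) / n) * (SS / S) = β * (n - 1) * SS / (n * S) := by
      field_simp
    show β * ((n - 1) / n) * (SS / S) - (γ + β) < 0 ↔ _
    rw [sub_neg, e1, div_lt_iff₀ (by positivity), div_mul_eq_mul_div,
      lt_div_iff₀ (by positivity)]
    constructor <;> intro h <;> nlinarith
end

section
/- Along the slow flow d[S]/dτ = 1 − [S], d[SS]/dτ = 2(n[S] − [SS]), the distance to the parabola Γ = {[SS] = n[S]²} decays exactly exponentially: d(τ) := |[SS](τ) − n[S](τ)²| satisfies d(τ) = e^{−2τ} d(0) for all τ ≥ 0. In particular the parabola Γ is invariant and uniformly exponentially attracting. -/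
open Real

/-- The distance to the parabola Γ = {[SS] = n[S]²} decays exactly like e^{−2τ} along the
slow flow; in particular Γ is invariant and uniformly exponentially attracting. -/
theorem parabola_uniformly_attracting (n : ℝ) (hn : 2 < n)
    (S SS : ℝ → ℝ)
    (hS : ∀ τ, HasDerivAt S (1 - S τ) τ)
    (hSS : ∀ τ, HasDerivAt SS (2 * (n * S τ - SS τ)) τ)
    (hinit : S 0 ∈ Set.Ioo (0:ℝ) 1 ∧ SS 0 ∈ Set.Ioo (0:ℝ) n) :
    ∀ τ ≥ (0:ℝ), |SS τ - n * (S τ) ^ 2| = exp (-2 * τ) * |SS 0 - n * (S 0) ^ 2| := by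
  set f : ℝ → ℝ := fun τ => (SS τ - n * (S τ) ^ 2) * exp (2 * τ) with hf
  have hderiv : ∀ τ, HasDerivAt f 0 τ := by
    intro τ
    have h1 : HasDerivAt (fun τ => SS τ - n * (S τ) ^ 2)
        (2 * (n * S τ - SS τ) - n * (2 * S τ * (1 - S τ))) τ := by
      have h := (hSS τ).sub (((hS τ).pow 2).const_mul n)
      simp at h
      refine h.congr_deriv ?_
      ring
    have h2 : HasDerivAt (fun τ : ℝ => exp (2 * τ)) (exp (2 * τ) * 2) τ := by
      simpa using (HasDerivAt.exp ((hasDerivAt_id τ).const_mul 2))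
    have := h1.mul h2
    refine this.congr_deriv ?_
    ring
  have hconst : ∀ τ, f τ = f 0 := by
    intro τ
    have : ∀ x : ℝ, deriv f x = 0 := fun x => (hderiv x).deriv
    have hd : Differentiable ℝ f := fun x => (hderiv x).differentiableAt
    exact is_const_of_deriv_eq_zero hd this τ 0
  intro τ _
  have h := hconst τ
  have hx : SS τ - n * (S τ) ^ 2 = exp (-2 * τ) * (SS 0 - n * (S 0) ^ 2) := by
    have hne : exp (2 * τ) ≠ 0 := (exp_pos _).ne'
    have hinv : exp (-2 * τ) = (exp (2 * τ))⁻¹ := by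
      rw [← exp_neg]; ring_nf
    simp only [hf, mul_zero, exp_zero, mul_one] at h
    rw [hinv, eq_comm, inv_mul_eq_div, div_eq_iff hne, mul_comm]
    linarith [h]
  rw [hx, abs_mul, abs_of_pos (exp_pos _)]
end

section
/- The region D = {([S],[SS]) ∈ (0,1)×(0,n) : [SS] < α([S])} with α(x) = 2nx²/(x+1) is forward invariant for the slow flow d[S]/dτ = 1 − [S], d[SS]/dτ = 2(n[S] − [SS]): on the boundary curve [SS] = α([S]), the inner product of the outward normal ν = (−α'([S]), 1) with the vector field equals 2(n(2[S]³+3[S]²−[S])/([S]+1)² − [SS]), which is strictly less than 2(α([S]) − [SS]) = 0 there. -/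
open Set Real

/-- Explicit solution of S' = 1 - S for t ≥ 0. -/
lemma S_formula_aux (S : ℝ → ℝ) (hS : ∀ τ ≥ (0:ℝ), HasDerivAt S (1 - S τ) τ) :
    ∀ t ≥ (0:ℝ), S t = 1 + (S 0 - 1) * Real.exp (-t) := by
  intro t ht
  have hcont : ContinuousOn (fun τ => Real.exp τ * (S τ - 1)) (Icc 0 t) := by
    intro x hx
    exact (Real.continuous_exp.continuousAt.mul
      (((hS x hx.1).differentiableAt.continuousAt).sub continuousAt_const)).continuousWithinAt
  have hderiv : ∀ x ∈ Ico (0:ℝ) t,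
      HasDerivWithinAt (fun τ => Real.exp τ * (S τ - 1)) 0 (Ici x) x := by
    intro x hx
    have h1 : HasDerivAt (fun τ => Real.exp τ * (S τ - 1))
        (Real.exp x * (S x - 1) + Real.exp x * (1 - S x)) x :=
      (Real.hasDerivAt_exp x).mul ((hS x hx.1).sub_const 1)
    have h2 : Real.exp x * (S x - 1) + Real.exp x * (1 - S x) = 0 := by ring
    rw [h2] at h1
    exact h1.hasDerivWithinAt
  have H := constant_of_has_deriv_right_zero hcont hderiv t (Set.right_mem_Icc.mpr ht)
  simp only [Real.exp_zero, one_mul] at H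
  have hpos := Real.exp_pos t
  have : Real.exp (-t) * Real.exp t = 1 := by
    rw [← Real.exp_add]; simp
  linear_combination Real.exp (-t) * H - (S t - 1) * this

/-- Explicit solution of SS' = 2(nS - SS) for t ≥ 0. -/
lemma SS_formula_aux (n : ℝ) (S SS : ℝ → ℝ)
    (hSf : ∀ t ≥ (0:ℝ), S t = 1 + (S 0 - 1) * Real.exp (-t))
    (hSS : ∀ τ ≥ (0:ℝ), HasDerivAt SS (2 * (n * S τ - SS τ)) τ) :
    ∀ t ≥ (0:ℝ), SS t = n + 2 * n * (S 0 - 1) * Real.exp (-t)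
      + (SS 0 - n - 2 * n * (S 0 - 1)) * Real.exp (-(2*t)) := by
  intro t ht
  set g : ℝ → ℝ := fun τ => Real.exp (2*τ) * SS τ - n * Real.exp (2*τ)
      - 2 * n * (S 0 - 1) * Real.exp τ with hg
  have hcont : ContinuousOn g (Icc 0 t) := by
    intro x hx
    have hc1 : ContinuousAt (fun τ : ℝ => Real.exp (2*τ)) x :=
      (Real.continuous_exp.comp (continuous_const.mul continuous_id)).continuousAt
    exact (((hc1.mul ((hSS x hx.1).differentiableAt.continuousAt)).sub
      (continuousAt_const.mul hc1)).sub
      (continuousAt_const.mul Real.continuous_exp.continuousAt)).continuousWithinAt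
  have hderiv : ∀ x ∈ Ico (0:ℝ) t, HasDerivWithinAt g 0 (Ici x) x := by
    intro x hx
    have he2 : HasDerivAt (fun τ : ℝ => Real.exp (2*τ)) (Real.exp (2*x) * 2) x := by
      exact HasDerivAt.exp (by simpa using (hasDerivAt_id x).const_mul 2)
    have h1 : HasDerivAt g
        ((Real.exp (2*x) * 2 * SS x + Real.exp (2*x) * (2 * (n * S x - SS x)))
          - n * (Real.exp (2*x) * 2) - 2 * n * (S 0 - 1) * Real.exp x) x :=
      ((he2.mul (hSS x hx.1)).sub (he2.const_mul n)).sub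
        ((Real.hasDerivAt_exp x).const_mul (2 * n * (S 0 - 1)))
    have hx0 : (0:ℝ) ≤ x := hx.1
    have hSx := hSf x hx0
    have hee : Real.exp (2*x) * Real.exp (-x) = Real.exp x := by
      rw [← Real.exp_add]; ring_nf
    have h2 : (Real.exp (2*x) * 2 * SS x + Real.exp (2*x) * (2 * (n * S x - SS x)))
          - n * (Real.exp (2*x) * 2) - 2 * n * (S 0 - 1) * Real.exp x = 0 := by
      rw [hSx]; linear_combination (2 * n * (S 0 - 1)) * hee
    rw [h2] at h1
    exact h1.hasDerivWithinAt
  have H := constant_of_has_deriv_right_zero hcont hderiv t (Set.right_mem_Icc.mpr ht)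
  have hg0 : g 0 = SS 0 - n - 2 * n * (S 0 - 1) := by simp [hg]
  rw [hg0] at H
  have h3 : Real.exp (-(2*t)) * Real.exp (2*t) = 1 := by rw [← Real.exp_add]; simp
  have h4 : Real.exp (-(2*t)) * Real.exp t = Real.exp (-t) := by
    rw [← Real.exp_add]; ring_nf
  have H2 := congrArg (fun y => Real.exp (-(2*t)) * y) H
  simp only [hg] at H2
  linear_combination H2 + (n - SS t) * h3 + 2 * n * (S 0 - 1) * h4

/-- Key polynomial inequality. -/
lemma key_ineq (n a b E : ℝ) (hn : 2 < n) (ha0 : 0 < a) (ha1 : a < 1)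
    (hb0 : 0 < b) (hbn : b < n) (hb : b * (a+1) < 2*n*a^2)
    (hE0 : 0 < E) (hE1 : E ≤ 1) :
    (n + 2*n*(a-1)*E + (b - n - 2*n*(a-1))*E^2) * ((1 + (a-1)*E) + 1)
      < 2*n*(1 + (a-1)*E)^2 := by
  have key : 0 < n*(1-a) - 2*(n-2*n*a+b)*E + (n-2*n*a+b)*(1-a)*E^2 := by
    rcases le_or_gt (n - 2*n*a + b) 0 with hc | hc
    · nlinarith [mul_nonneg (neg_nonneg.mpr hc)
        (mul_pos hE0 (show (0:ℝ) < 2 - (1-a)*E by nlinarith)).le,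
        mul_pos (show (0:ℝ) < n by linarith) (sub_pos.mpr ha1)]
    · nlinarith [mul_nonneg (mul_nonneg hc.le (by linarith : (0:ℝ) ≤ 1 - E))
        (show (0:ℝ) ≤ 2 - (1-a)*(1+E) by nlinarith)]
  nlinarith [mul_pos hE0 key]

/-- The region below the curve α([S]) = 2n[S]²/([S]+1) is forward invariant for the slow
flow: the outward normal inner product on the boundary is negative, and solutions starting
in the region stay in it. -/
theorem region_below_alpha_forward_invariant (n : ℝ) (hn : 2 < n) :
    (∀ s : ℝ, s ∈ Set.Ioo (0:ℝ) 1 → ∀ ss : ℝ, ss = 2 * n * s ^ 2 / (s + 1) →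
      (-(2 * n * s * (s + 2) / (s + 1) ^ 2)) * (1 - s) + 1 * (2 * (n * s - ss))
          = 2 * (n * (2 * s ^ 3 + 3 * s ^ 2 - s) / (s + 1) ^ 2 - ss) ∧
        2 * (n * (2 * s ^ 3 + 3 * s ^ 2 - s) / (s + 1) ^ 2 - ss)
          < 2 * (2 * n * s ^ 2 / (s + 1) - ss)) ∧
    (∀ S SS : ℝ → ℝ,
      (∀ τ ≥ (0:ℝ), HasDerivAt S (1 - S τ) τ) →
      (∀ τ ≥ (0:ℝ), HasDerivAt SS (2 * (n * S τ - SS τ)) τ) →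
      S 0 ∈ Set.Ioo (0:ℝ) 1 → SS 0 ∈ Set.Ioo (0:ℝ) n →
      SS 0 < 2 * n * (S 0) ^ 2 / (S 0 + 1) →
      ∀ τ ≥ (0:ℝ), S τ ∈ Set.Ioo (0:ℝ) 1 ∧ SS τ ∈ Set.Ioo (0:ℝ) n ∧
        SS τ < 2 * n * (S τ) ^ 2 / (S τ + 1)) := by
  constructor
  · intro s hs ss hss
    obtain ⟨hs0, hs1⟩ := hs
    have h1 : (0:ℝ) < s + 1 := by linarith
    constructor
    · field_simp
      ring
    · have h2 : n * (2 * s ^ 3 + 3 * s ^ 2 - s) / (s + 1) ^ 2 < 2 * n * s ^ 2 / (s + 1) := by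
        rw [div_lt_div_iff₀ (by positivity) h1]
        nlinarith [mul_pos hs0 (sub_pos.mpr hs1), mul_pos h1 (mul_pos hs0 (sub_pos.mpr hs1))]
      linarith
  · intro S SS hS hSS hS0 hSS0 hb τ hτ
    obtain ⟨ha0, ha1⟩ := hS0
    obtain ⟨hb0, hbn⟩ := hSS0
    have hSf := S_formula_aux S hS
    have hSSf := SS_formula_aux n S SS hSf hSS
    set a := S 0
    set b := SS 0
    have hb' : b * (a + 1) < 2 * n * a ^ 2 := by
      calc b * (a + 1) < 2 * n * a ^ 2 / (a + 1) * (a + 1) := by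
            exact mul_lt_mul_of_pos_right hb (by linarith)
        _ = 2 * n * a ^ 2 := by field_simp
    set E := Real.exp (-τ) with hE
    have hE0 : 0 < E := Real.exp_pos _
    have hE1 : E ≤ 1 := Real.exp_le_one_iff.mpr (by linarith)
    have hSτ : S τ = 1 + (a - 1) * E := hSf τ hτ
    have hE2 : Real.exp (-(2*τ)) = E^2 := by
      rw [hE, pow_two, ← Real.exp_add]; ring_nf
    have hSSτ : SS τ = n + 2*n*(a-1)*E + (b - n - 2*n*(a-1))*E^2 := by
      rw [hSSf τ hτ, hE2]
    have hS1 : (0:ℝ) < S τ := by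
      rw [hSτ]; nlinarith [mul_le_mul_of_nonneg_left hE1 (sub_pos.mpr ha1).le]
    have hS2 : S τ < 1 := by
      rw [hSτ]; nlinarith [mul_pos (sub_pos.mpr ha1) hE0]
    refine ⟨⟨hS1, hS2⟩, ⟨?_, ?_⟩, ?_⟩
    · rw [hSSτ]
      nlinarith [sq_nonneg (1 - E), mul_pos hE0 hb0,
        mul_nonneg (mul_nonneg (by nlinarith : (0:ℝ) ≤ 2*n*a) hE0.le) (by linarith : (0:ℝ) ≤ 1 - E),
        mul_pos (mul_pos hE0 hE0) hb0]
    · rw [hSSτ]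
      nlinarith [mul_nonneg (mul_nonneg (by nlinarith : (0:ℝ) ≤ 2*n*(1-a)) hE0.le)
          (by linarith : (0:ℝ) ≤ 1 - E),
        mul_pos (mul_pos hE0 hE0) (sub_pos.mpr hbn)]
    · rw [lt_div_iff₀ (by linarith : (0:ℝ) < S τ + 1), hSτ, hSSτ]
      have := key_ineq n a b E hn ha0 ha1 hb0 hbn hb' hE0 hE1
      nlinarith [this]
end

section
/- Let β, γ > 0, n > 2 with (n−2)β > γ, and let λ₅(τ) denote −(γ+β) + β((n−1)/n)·[SS](τ)/[S](τ) along the explicit slow-flow solution with initial data ([S]∞,[SS]∞) ∈ (0,1)×(0,n) satisfying [SS]∞ < L[S]∞ (attracting region, so λ₅(0) < 0). Then ∫₀^T λ₅(σ) dσ → +∞ as T → +∞, and consequently there exists a finite T_E > 0 with ∫₀^{T_E} λ₅(σ) dσ = 0. -/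
open Real Filter intervalIntegral

/-- Divergence of the accumulated exponential rate and existence of a finite exit time for
the entry–exit mechanism along the explicit slow-flow solution. -/
theorem exit_time_finite (β γ n Sinf SSinf : ℝ)
    (hβ : 0 < β) (hγ : 0 < γ) (hn : 2 < n) (hR0 : γ < (n - 2) * β)
    (hSinf : Sinf ∈ Set.Ioo (0:ℝ) 1) (hSSinf : SSinf ∈ Set.Ioo (0:ℝ) n)
    (hattr : SSinf < (n * (β + γ) / (β * (n - 1))) * Sinf) :
    let S : ℝ → ℝ := fun τ => (Sinf - 1) * exp (-τ) + 1
    let SS : ℝ → ℝ := fun τ =>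
      2 * (Sinf - 1) * n * exp (-2 * τ) * (exp τ - 1) + (SSinf - n) * exp (-2 * τ) + n
    let lam5 : ℝ → ℝ := fun τ => -(γ + β) + β * ((n - 1) / n) * (SS τ / S τ)
    Tendsto (fun T => ∫ σ in (0:ℝ)..T, lam5 σ) atTop atTop ∧
    ∃ TE : ℝ, 0 < TE ∧ (∫ σ in (0:ℝ)..TE, lam5 σ) = 0 := by
  intro S SS lam5
  obtain ⟨hS0, hS1⟩ := hSinf
  have hn0 : (0:ℝ) < n := by linarith
  -- positivity of S on [0, ∞)
  have hSpos : ∀ τ ∈ Set.Ici (0:ℝ), 0 < S τ := by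
    intro τ hτ
    have h1 : exp (-τ) ≤ 1 := exp_le_one_iff.mpr (by simpa using hτ)
    have h2 : 0 < exp (-τ) := exp_pos _
    have := mul_nonneg (by linarith : (0:ℝ) ≤ 1 - Sinf) (by linarith : 0 ≤ 1 - exp (-τ))
    simp only [S]
    nlinarith
  -- continuity
  have hScont : Continuous S := by unfold S; fun_prop
  have hSScont : Continuous SS := by unfold SS; fun_prop
  have hlamcont : ContinuousOn lam5 (Set.Ici 0) := by
    apply ContinuousOn.add continuousOn_const
    apply ContinuousOn.mul continuousOn_const
    exact ContinuousOn.div hSScont.continuousOn hScont.continuousOn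
      (fun τ hτ => (hSpos τ hτ).ne')
  -- interval integrability on nonneg intervals
  have hint : ∀ a b : ℝ, 0 ≤ a → 0 ≤ b → IntervalIntegrable lam5 MeasureTheory.volume a b := by
    intro a b ha hb
    apply ContinuousOn.intervalIntegrable
    exact hlamcont.mono (fun x hx => le_trans (le_min ha hb) hx.1)
  set F : ℝ → ℝ := fun T => ∫ σ in (0:ℝ)..T, lam5 σ with hF
  -- the limit of lam5 at infinity
  set linf : ℝ := β * (n - 2) - γ with hlinf
  have hlinfpos : 0 < linf := by nlinarith
  have hexp1 : Tendsto (fun τ : ℝ => exp (-τ)) atTop (nhds 0) :=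
    tendsto_exp_neg_atTop_nhds_zero
  have hexp2 : Tendsto (fun τ : ℝ => exp (-2 * τ)) atTop (nhds 0) := by
    have h2 : Tendsto (fun τ : ℝ => 2 * τ) atTop atTop :=
      (tendsto_id.const_mul_atTop (by norm_num : (0:ℝ) < 2))
    have heq : (fun τ : ℝ => exp (-2 * τ)) = (fun τ => exp (-τ)) ∘ (fun τ : ℝ => 2 * τ) := by
      funext τ; simp [Function.comp, neg_mul]
    rw [heq]; exact hexp1.comp h2
  have hSlim : Tendsto S atTop (nhds 1) := by
    have := (hexp1.const_mul (Sinf - 1)).add_const 1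
    simpa using this
  have hSSlim : Tendsto SS atTop (nhds n) := by
    have key : ∀ τ : ℝ, SS τ = 2 * (Sinf - 1) * n * (exp (-τ) - exp (-2 * τ)) +
        (SSinf - n) * exp (-2 * τ) + n := by
      intro τ
      have h : exp (-2 * τ) * exp τ = exp (-τ) := by
        rw [← Real.exp_add]; ring_nf
      simp only [SS]
      linear_combination (2 * (Sinf - 1) * n) * h
    rw [show SS = fun τ => 2 * (Sinf - 1) * n * (exp (-τ) - exp (-2 * τ)) +
        (SSinf - n) * exp (-2 * τ) + n from funext key]
    have h1 := ((hexp1.sub hexp2).const_mul (2 * (Sinf - 1) * n)).add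
      (hexp2.const_mul (SSinf - n))
    have := h1.add_const n
    simpa using this
  have hlamlim : Tendsto lam5 atTop (nhds linf) := by
    have hdiv : Tendsto (fun τ => SS τ / S τ) atTop (nhds n) := by
      simpa only [div_one, Pi.div_def] using hSSlim.div hSlim (by norm_num)
    have := (hdiv.const_mul (β * ((n - 1) / n))).const_add (-(γ + β))
    convert this using 2
    field_simp [hlinf]
    try ring
  -- eventual lower bound and divergence of F
  have hev : ∀ᶠ τ in atTop, linf / 2 ≤ lam5 τ :=
    hlamlim.eventually (eventually_ge_nhds (by linarith))
  obtain ⟨T₀, hT₀⟩ := eventually_atTop.mp hev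
  set T₁ : ℝ := max T₀ 0 with hT₁def
  have hT₁0 : 0 ≤ T₁ := le_max_right _ _
  have hlow : ∀ T, T₁ ≤ T → F T₁ + (T - T₁) * (linf / 2) ≤ F T := by
    intro T hT
    have hT0 : 0 ≤ T := le_trans hT₁0 hT
    have hsplit : F T₁ + (∫ σ in T₁..T, lam5 σ) = F T :=
      integral_add_adjacent_intervals (hint 0 T₁ le_rfl hT₁0) (hint T₁ T hT₁0 hT0)
    have hmono : (T - T₁) * (linf / 2) ≤ ∫ σ in T₁..T, lam5 σ := by
      have := integral_mono_on (μ := MeasureTheory.volume) hT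
        (_root_.intervalIntegrable_const (c := linf / 2)) (hint T₁ T hT₁0 hT0)
        (fun x hx => hT₀ x (le_trans (le_max_left _ _) hx.1))
      rwa [intervalIntegral.integral_const, smul_eq_mul] at this
    linarith
  have htop : Tendsto F atTop atTop := by
    apply tendsto_atTop_mono' atTop (eventually_atTop.mpr ⟨T₁, hlow⟩)
    apply tendsto_atTop_add_const_left
    exact ((tendsto_atTop_add_const_right _ (-T₁) tendsto_id).atTop_mul_const
      (half_pos hlinfpos))
  refine ⟨htop, ?_⟩
  -- lam5 0 < 0
  have hS00 : S 0 = Sinf := by simp [S]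
  have hSS00 : SS 0 = SSinf := by simp [SS]
  have hcneg : -(γ + β) + β * ((n - 1) / n) * (SSinf / Sinf) < 0 := by
    have hβn1 : 0 < β * (n - 1) := by nlinarith
    have hattr' : SSinf * (β * (n - 1)) < n * (β + γ) * Sinf := by
      rw [div_mul_eq_mul_div, lt_div_iff₀ hβn1] at hattr
      linarith
    have h2 : β * ((n - 1) / n) * (SSinf / Sinf) < γ + β := by
      rw [show β * ((n - 1) / n) * (SSinf / Sinf) = (β * (n - 1) * SSinf) / (n * Sinf) by
        field_simp; try ring]
      rw [div_lt_iff₀ (by positivity : (0:ℝ) < n * Sinf)]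
      nlinarith
    linarith
  have hlam0 : lam5 0 = -(γ + β) + β * ((n - 1) / n) * (SSinf / Sinf) := by
    simp only [lam5, hS00, hSS00]
  -- F is negative just after 0
  have hevneg : ∀ᶠ τ in nhdsWithin 0 (Set.Ici 0),
      lam5 τ ≤ (-(γ + β) + β * ((n - 1) / n) * (SSinf / Sinf)) / 2 := by
    have hcw : ContinuousWithinAt lam5 (Set.Ici 0) 0 :=
      hlamcont.continuousWithinAt (Set.self_mem_Ici)
    have hcw2 : Tendsto lam5 (nhdsWithin 0 (Set.Ici 0)) (nhds (lam5 0)) := hcw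
    rw [hlam0] at hcw2
    exact hcw2.eventually (eventually_le_nhds (by linarith))
  obtain ⟨δ, hδ0, hδ⟩ := mem_nhdsGE_iff_exists_Icc_subset.mp hevneg
  have hFδ : F δ < 0 := by
    have hmono : F δ ≤ δ * ((-(γ + β) + β * ((n - 1) / n) * (SSinf / Sinf)) / 2) := by
      have h := integral_mono_on (μ := MeasureTheory.volume) hδ0.le
        (hint 0 δ le_rfl hδ0.le)
        (_root_.intervalIntegrable_const
          (c := (-(γ + β) + β * ((n - 1) / n) * (SSinf / Sinf)) / 2))
        (fun x hx => hδ hx)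
      rw [intervalIntegral.integral_const, smul_eq_mul] at h
      show (∫ σ in (0:ℝ)..δ, lam5 σ) ≤ _
      linarith
    have hneg : δ * ((-(γ + β) + β * ((n - 1) / n) * (SSinf / Sinf)) / 2) < 0 :=
      mul_neg_of_pos_of_neg hδ0 (by linarith)
    linarith
  -- pick a point where F is positive
  obtain ⟨T₂', hT₂'⟩ := eventually_atTop.mp (htop.eventually_gt_atTop 0)
  set T₂ : ℝ := max T₂' δ with hT₂def
  have hδT₂ : δ ≤ T₂ := le_max_right _ _
  have hFT₂ : 0 < F T₂ := hT₂' _ (le_max_left _ _)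
  have hT₂0 : 0 ≤ T₂ := le_trans hδ0.le hδT₂
  -- F continuous on [0, T₂]
  have hFcont : ContinuousOn F (Set.Icc 0 T₂) := by
    have hIO : MeasureTheory.IntegrableOn lam5 (Set.uIcc 0 T₂) MeasureTheory.volume := by
      rw [Set.uIcc_of_le hT₂0]
      exact (hlamcont.mono (fun x hx => hx.1)).integrableOn_Icc
    have := intervalIntegral.continuousOn_primitive_interval (a := 0) (b := T₂) hIO
    rwa [Set.uIcc_of_le hT₂0] at this
  -- IVT
  have hivt := intermediate_value_Icc hδT₂
    (hFcont.mono (Set.Icc_subset_Icc hδ0.le le_rfl))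
  have h0mem : (0:ℝ) ∈ Set.Icc (F δ) (F T₂) := ⟨hFδ.le, hFT₂.le⟩
  obtain ⟨TE, hTE, hFTE⟩ := hivt h0mem
  exact ⟨TE, lt_of_lt_of_le hδ0 hTE.1, hFTE⟩
end
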